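/- Let W be a 4-dimensional linear subspace of ℝ⁷ containing a 3-dimensional linear subspace that is closed under the cross product determined by φ₀. Then W is Type-I 2-coisotropic, i.e. W_I^{⊥,2} ⊆ W; in fact W_I^{⊥,2} is 1-dimensional. -/

import Mathlib

open Module

/-- The exterior 3-form `dxᵃ ∧ dxᵇ ∧ dxᶜ` on `ℝ⁷`. -/
noncomputable def dx3 (a b c : Fin 7) : (Fin 7 → ℝ) [⋀^Fin 3]→ₗ[ℝ] ℝ :=
  (Matrix.detRowAlternating : (Fin 3 → ℝ) [⋀^Fin 3]→ₗ[ℝ] ℝ).compLinearMap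
    (LinearMap.funLeft ℝ ℝ ![a, b, c])

/-- The standard `G₂` 3-form
`φ₀ = dx¹²³ + dx¹⁴⁵ + dx¹⁶⁷ + dx²⁴⁶ − dx²⁵⁷ − dx³⁴⁷ − dx³⁵⁶` on `ℝ⁷`
(with indices shifted to `0, …, 6`). -/
noncomputable def phi0 : (Fin 7 → ℝ) [⋀^Fin 3]→ₗ[ℝ] ℝ :=
  dx3 0 1 2 + dx3 0 3 4 + dx3 0 5 6 + dx3 1 3 5 - dx3 1 4 6 - dx3 2 3 6 - dx3 2 4 5

/-- The Type-I 1st orthogonal complement of `W ⊆ ℝ⁷` with respect to `φ₀`. -/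
def WIperp1 (W : Submodule ℝ (Fin 7 → ℝ)) : Set (Fin 7 → ℝ) :=
  {v | ∀ w ∈ W, ∀ u : Fin 7 → ℝ, phi0 ![v, w, u] = 0}

/-- The Type-I 2nd orthogonal complement of `W ⊆ ℝ⁷` with respect to `φ₀`. -/
def WIperp2 (W : Submodule ℝ (Fin 7 → ℝ)) : Set (Fin 7 → ℝ) :=
  {v | ∀ w₁ ∈ W, ∀ w₂ ∈ W, phi0 ![v, w₁, w₂] = 0}

/-- `U` is closed under the cross product determined by `φ₀`: for all `u, v ∈ U`
and every `z` orthogonal to `U` (w.r.t. the standard inner product),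
`φ₀ (u, v, z) = 0`, i.e. `u × v ∈ U`. -/
def CrossClosed (U : Submodule ℝ (Fin 7 → ℝ)) : Prop :=
  ∀ u ∈ U, ∀ v ∈ U, ∀ z : Fin 7 → ℝ, (∀ x ∈ U, ∑ i, z i * x i = 0) → phi0 ![u, v, z] = 0

/-! ### Auxiliary material: the cross product on `ℝ⁷` -/

lemma dx3_apply' (a b c : Fin 7) (u v w : Fin 7 → ℝ) :
    dx3 a b c ![u,v,w] = u a * (v b * w c) - u a * (v c * w b) - u b * (v a * w c)
      + u b * (v c * w a) + u c * (v a * w b) - u c * (v b * w a) := by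
  show Matrix.det (Matrix.of fun i => (![u,v,w] i) ∘ ![a,b,c]) = _
  rw [Matrix.det_fin_three]
  simp [Matrix.of_apply, Function.comp]
  ring

/-- The cross product on `ℝ⁷` determined by `φ₀`. -/
def crossf (u v : Fin 7 → ℝ) : Fin 7 → ℝ :=
  ![u 1*v 2-u 2*v 1+u 3*v 4-u 4*v 3+u 5*v 6-u 6*v 5,
    u 2*v 0-u 0*v 2+u 3*v 5-u 5*v 3-u 4*v 6+u 6*v 4,
    u 0*v 1-u 1*v 0-u 3*v 6+u 6*v 3-u 4*v 5+u 5*v 4,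
    u 4*v 0-u 0*v 4+u 5*v 1-u 1*v 5+u 2*v 6-u 6*v 2,
    u 0*v 3-u 3*v 0+u 1*v 6-u 6*v 1+u 2*v 5-u 5*v 2,
    u 6*v 0-u 0*v 6+u 1*v 3-u 3*v 1-u 2*v 4+u 4*v 2,
    u 0*v 5-u 5*v 0-u 1*v 4+u 4*v 1-u 2*v 3+u 3*v 2]

@[simp] lemma crossf_0 (u v : Fin 7 → ℝ) :
    crossf u v 0 = u 1*v 2-u 2*v 1+u 3*v 4-u 4*v 3+u 5*v 6-u 6*v 5 := rfl
@[simp] lemma crossf_mk0 (u v : Fin 7 → ℝ) (h : (0:ℕ) < 7) :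
    crossf u v ⟨0,h⟩ = u 1*v 2-u 2*v 1+u 3*v 4-u 4*v 3+u 5*v 6-u 6*v 5 := rfl
@[simp] lemma crossf_1 (u v : Fin 7 → ℝ) :
    crossf u v 1 = u 2*v 0-u 0*v 2+u 3*v 5-u 5*v 3-u 4*v 6+u 6*v 4 := rfl
@[simp] lemma crossf_mk1 (u v : Fin 7 → ℝ) (h : (1:ℕ) < 7) :
    crossf u v ⟨1,h⟩ = u 2*v 0-u 0*v 2+u 3*v 5-u 5*v 3-u 4*v 6+u 6*v 4 := rfl
@[simp] lemma crossf_2 (u v : Fin 7 → ℝ) :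
    crossf u v 2 = u 0*v 1-u 1*v 0-u 3*v 6+u 6*v 3-u 4*v 5+u 5*v 4 := rfl
@[simp] lemma crossf_mk2 (u v : Fin 7 → ℝ) (h : (2:ℕ) < 7) :
    crossf u v ⟨2,h⟩ = u 0*v 1-u 1*v 0-u 3*v 6+u 6*v 3-u 4*v 5+u 5*v 4 := rfl
@[simp] lemma crossf_3 (u v : Fin 7 → ℝ) :
    crossf u v 3 = u 4*v 0-u 0*v 4+u 5*v 1-u 1*v 5+u 2*v 6-u 6*v 2 := rfl
@[simp] lemma crossf_mk3 (u v : Fin 7 → ℝ) (h : (3:ℕ) < 7) :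
    crossf u v ⟨3,h⟩ = u 4*v 0-u 0*v 4+u 5*v 1-u 1*v 5+u 2*v 6-u 6*v 2 := rfl
@[simp] lemma crossf_4 (u v : Fin 7 → ℝ) :
    crossf u v 4 = u 0*v 3-u 3*v 0+u 1*v 6-u 6*v 1+u 2*v 5-u 5*v 2 := rfl
@[simp] lemma crossf_mk4 (u v : Fin 7 → ℝ) (h : (4:ℕ) < 7) :
    crossf u v ⟨4,h⟩ = u 0*v 3-u 3*v 0+u 1*v 6-u 6*v 1+u 2*v 5-u 5*v 2 := rfl
@[simp] lemma crossf_5 (u v : Fin 7 → ℝ) :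
    crossf u v 5 = u 6*v 0-u 0*v 6+u 1*v 3-u 3*v 1-u 2*v 4+u 4*v 2 := rfl
@[simp] lemma crossf_mk5 (u v : Fin 7 → ℝ) (h : (5:ℕ) < 7) :
    crossf u v ⟨5,h⟩ = u 6*v 0-u 0*v 6+u 1*v 3-u 3*v 1-u 2*v 4+u 4*v 2 := rfl
@[simp] lemma crossf_6 (u v : Fin 7 → ℝ) :
    crossf u v 6 = u 0*v 5-u 5*v 0-u 1*v 4+u 4*v 1-u 2*v 3+u 3*v 2 := rfl
@[simp] lemma crossf_mk6 (u v : Fin 7 → ℝ) (h : (6:ℕ) < 7) :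
    crossf u v ⟨6,h⟩ = u 0*v 5-u 5*v 0-u 1*v 4+u 4*v 1-u 2*v 3+u 3*v 2 := rfl

@[simp] lemma fin7_mk0 (h : (0:ℕ) < 7) : (⟨0,h⟩ : Fin 7) = 0 := rfl
@[simp] lemma fin7_mk1 (h : (1:ℕ) < 7) : (⟨1,h⟩ : Fin 7) = 1 := rfl
@[simp] lemma fin7_mk2 (h : (2:ℕ) < 7) : (⟨2,h⟩ : Fin 7) = 2 := rfl
@[simp] lemma fin7_mk3 (h : (3:ℕ) < 7) : (⟨3,h⟩ : Fin 7) = 3 := rfl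
@[simp] lemma fin7_mk4 (h : (4:ℕ) < 7) : (⟨4,h⟩ : Fin 7) = 4 := rfl
@[simp] lemma fin7_mk5 (h : (5:ℕ) < 7) : (⟨5,h⟩ : Fin 7) = 5 := rfl
@[simp] lemma fin7_mk6 (h : (6:ℕ) < 7) : (⟨6,h⟩ : Fin 7) = 6 := rfl

lemma phi0_cross (u v w : Fin 7 → ℝ) : phi0 ![u,v,w] = ∑ i, crossf u v i * w i := by
  simp only [phi0, AlternatingMap.sub_apply, AlternatingMap.add_apply, dx3_apply']
  simp only [Fin.sum_univ_seven, crossf_0, crossf_1, crossf_2, crossf_3, crossf_4,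
    crossf_5, crossf_6]
  ring

lemma phi0_cross' (v w1 w2 : Fin 7 → ℝ) : phi0 ![v,w1,w2] = ∑ i, crossf w1 w2 i * v i := by
  rw [phi0_cross]
  simp only [Fin.sum_univ_seven, crossf_0, crossf_1, crossf_2, crossf_3, crossf_4,
    crossf_5, crossf_6]
  ring

lemma crossf_crossf (u v : Fin 7 → ℝ) :
    crossf u (crossf u v) = (∑ i, u i * v i) • u - (∑ i, u i * u i) • v := by
  funext k
  fin_cases k <;>
    (simp only [Pi.sub_apply, Pi.smul_apply, smul_eq_mul, Fin.sum_univ_seven,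
      crossf_0, crossf_1, crossf_2, crossf_3, crossf_4, crossf_5, crossf_6,
      fin7_mk0, fin7_mk1, fin7_mk2, fin7_mk3, fin7_mk4, fin7_mk5, fin7_mk6,
      crossf_mk0, crossf_mk1, crossf_mk2, crossf_mk3, crossf_mk4, crossf_mk5, crossf_mk6];
     ring)

lemma norm_cross (u v : Fin 7 → ℝ) :
    ∑ i, crossf u v i * crossf u v i
      = (∑ i, u i * u i) * (∑ i, v i * v i) - (∑ i, u i * v i) ^ 2 := by
  simp only [Fin.sum_univ_seven, crossf_0, crossf_1, crossf_2, crossf_3, crossf_4,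
    crossf_5, crossf_6]
  ring

lemma dot_cross_right (u v : Fin 7 → ℝ) : ∑ i, crossf u v i * v i = 0 := by
  simp only [Fin.sum_univ_seven, crossf_0, crossf_1, crossf_2, crossf_3, crossf_4,
    crossf_5, crossf_6]
  ring

lemma dot_cross_left (u v : Fin 7 → ℝ) : ∑ i, crossf u v i * u i = 0 := by
  simp only [Fin.sum_univ_seven, crossf_0, crossf_1, crossf_2, crossf_3, crossf_4,
    crossf_5, crossf_6]
  ring

lemma dot_cross_swap (u v w : Fin 7 → ℝ) :
    ∑ i, crossf u v i * w i = -∑ i, crossf u w i * v i := by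
  simp only [Fin.sum_univ_seven, crossf_0, crossf_1, crossf_2, crossf_3, crossf_4,
    crossf_5, crossf_6]
  ring

lemma dot_cross_expand (u1 u2 n : Fin 7 → ℝ) (a b : ℝ) :
    ∑ i, crossf (u1 + a • n) (u2 + b • n) i * n i
      = ∑ i, crossf u1 u2 i * n i + a * ∑ i, crossf n u2 i * n i
        + b * ∑ i, crossf u1 n i * n i + (a * b) * ∑ i, crossf n n i * n i := by
  simp only [Fin.sum_univ_seven, crossf_0, crossf_1, crossf_2, crossf_3, crossf_4,
    crossf_5, crossf_6, Pi.add_apply, Pi.smul_apply, smul_eq_mul]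
  ring

/-- The linear map `u ↦ u × n`. -/
def crossL (n : Fin 7 → ℝ) : (Fin 7 → ℝ) →ₗ[ℝ] (Fin 7 → ℝ) where
  toFun u := crossf u n
  map_add' a b := by
    funext k
    fin_cases k <;>
      (simp only [crossf_mk0, crossf_mk1, crossf_mk2, crossf_mk3, crossf_mk4, crossf_mk5,
        crossf_mk6, Pi.add_apply]; ring)
  map_smul' c a := by
    funext k
    fin_cases k <;>
      (simp only [crossf_mk0, crossf_mk1, crossf_mk2, crossf_mk3, crossf_mk4, crossf_mk5,
        crossf_mk6, Pi.smul_apply, smul_eq_mul, RingHom.id_apply]; ring)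

@[simp] lemma crossL_apply (n u : Fin 7 → ℝ) : crossL n u = crossf u n := rfl

/-! ### The standard orthogonal complement on `Fin 7 → ℝ` -/

noncomputable def e7 : (Fin 7 → ℝ) ≃ₗ[ℝ] EuclideanSpace ℝ (Fin 7) :=
  (WithLp.linearEquiv 2 ℝ (Fin 7 → ℝ)).symm

lemma e7_inner (x y : Fin 7 → ℝ) : (inner ℝ (e7 x) (e7 y) : ℝ) = ∑ i, x i * y i := by
  simp [e7, PiLp.inner_apply, RCLike.inner_apply, WithLp.linearEquiv]
  exact Finset.sum_congr rfl fun i _ => mul_comm _ _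

/-- Orthogonal complement w.r.t. the standard dot product, as a submodule of `Fin 7 → ℝ`. -/
noncomputable def Odot (K : Submodule ℝ (Fin 7 → ℝ)) : Submodule ℝ (Fin 7 → ℝ) :=
  ((K.map (e7 : (Fin 7 → ℝ) →ₗ[ℝ] EuclideanSpace ℝ (Fin 7)))ᗮ).map
    (e7.symm : EuclideanSpace ℝ (Fin 7) →ₗ[ℝ] (Fin 7 → ℝ))

lemma mem_Odot {K : Submodule ℝ (Fin 7 → ℝ)} {x : Fin 7 → ℝ} :
    x ∈ Odot K ↔ ∀ y ∈ K, ∑ i, y i * x i = 0 := by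
  rw [Odot, Submodule.mem_map_equiv]
  simp only [LinearEquiv.symm_symm, Submodule.mem_orthogonal]
  constructor
  · intro h y hy
    rw [← e7_inner]
    exact h (e7 y) (Submodule.mem_map_of_mem hy)
  · rintro h z ⟨y, hy, rfl⟩
    rw [show (e7 : (Fin 7 → ℝ) →ₗ[ℝ] _) y = e7 y from rfl, e7_inner]
    exact h y hy

lemma finrank_Odot (K : Submodule ℝ (Fin 7 → ℝ)) :
    finrank ℝ (Odot K) = 7 - finrank ℝ K := by
  have h1 : finrank ℝ (Odot K) = finrank ℝ
      ((K.map (e7 : (Fin 7 → ℝ) →ₗ[ℝ] EuclideanSpace ℝ (Fin 7)))ᗮ) :=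
    LinearEquiv.finrank_map_eq e7.symm _
  have h2 := Submodule.finrank_add_finrank_orthogonal
    (K := K.map (e7 : (Fin 7 → ℝ) →ₗ[ℝ] EuclideanSpace ℝ (Fin 7)))
  rw [finrank_euclideanSpace_fin] at h2
  have h3 : finrank ℝ (K.map (e7 : (Fin 7 → ℝ) →ₗ[ℝ] EuclideanSpace ℝ (Fin 7)))
      = finrank ℝ K := LinearEquiv.finrank_map_eq e7 K
  omega

lemma self_dot_ne {x : Fin 7 → ℝ} (hx : x ≠ 0) : ∑ i, x i * x i ≠ 0 := by
  intro h
  apply hx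
  funext i
  have h0 : ∀ j ∈ Finset.univ, (0:ℝ) ≤ x j * x j := fun j _ => mul_self_nonneg _
  have := (Finset.sum_eq_zero_iff_of_nonneg h0).mp h i (Finset.mem_univ i)
  exact mul_self_eq_zero.mp this

lemma inf_Odot_eq_bot (K : Submodule ℝ (Fin 7 → ℝ)) : K ⊓ Odot K = ⊥ := by
  rw [eq_bot_iff]
  rintro x ⟨hx1, hx2⟩
  by_contra hx
  have hx0 : x ≠ 0 := fun h => hx (h ▸ Submodule.zero_mem ⊥)
  exact self_dot_ne hx0 (mem_Odot.mp hx2 x hx1)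

lemma finrank_le7 (K : Submodule ℝ (Fin 7 → ℝ)) : finrank ℝ K ≤ 7 := by
  have := Submodule.finrank_le K
  rwa [Module.finrank_fin_fun] at this

lemma sup_Odot_eq_top (K : Submodule ℝ (Fin 7 → ℝ)) : K ⊔ Odot K = ⊤ := by
  apply Submodule.eq_top_of_finrank_eq
  have h1 := Submodule.finrank_sup_add_finrank_inf_eq K (Odot K)
  rw [inf_Odot_eq_bot, finrank_bot, finrank_Odot] at h1
  have h2 := finrank_le7 K
  rw [Module.finrank_fin_fun]
  omega

lemma Odot_Odot (K : Submodule ℝ (Fin 7 → ℝ)) : Odot (Odot K) = K := by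
  symm
  apply Submodule.eq_of_le_of_finrank_le
  · intro x hx
    rw [mem_Odot]
    intro y hy
    have := mem_Odot.mp hy x hx
    rw [← this]
    exact Finset.sum_congr rfl fun i _ => mul_comm _ _
  · rw [finrank_Odot, finrank_Odot]
    have h2 := finrank_le7 K
    omega

lemma dot_expand_left (u' nn u : Fin 7 → ℝ) (c : ℝ) :
    ∑ i, (u' + c • nn) i * crossf u nn i
      = (∑ i, crossf u nn i * u' i) + c * (∑ i, crossf u nn i * nn i) := by
  simp only [Fin.sum_univ_seven, crossf_0, crossf_1, crossf_2, crossf_3, crossf_4,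
    crossf_5, crossf_6, Pi.add_apply, Pi.smul_apply, smul_eq_mul]
  ring

/-- if `W` is a 4-dimensional subspace of `ℝ⁷` containing a 3-dimensional
subspace closed under the cross product determined by `φ₀`, then `W` is Type-I
2-coisotropic (`W_I^{⊥,2} ⊆ W`); in fact `W_I^{⊥,2}` is 1-dimensional. -/
theorem g2_dim_four_with_associative_coisotropic (W : Submodule ℝ (Fin 7 → ℝ))
    (hW : Module.finrank ℝ W = 4)
    (hsub : ∃ U : Submodule ℝ (Fin 7 → ℝ), U ≤ W ∧ Module.finrank ℝ U = 3 ∧ CrossClosed U) :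
    WIperp2 W ⊆ (W : Set (Fin 7 → ℝ)) ∧
    ∃ L : Submodule ℝ (Fin 7 → ℝ), Module.finrank ℝ L = 1 ∧
      WIperp2 W = (L : Set (Fin 7 → ℝ)) := by
  obtain ⟨U, hUW, hU3, hUc⟩ := hsub
  -- U is closed under the cross product
  have hcrossU : ∀ u ∈ U, ∀ v ∈ U, crossf u v ∈ U := by
    intro u hu v hv
    rw [← Odot_Odot U, mem_Odot]
    intro z hz
    have hz' : ∀ x ∈ U, ∑ i, z i * x i = 0 := fun x hx => by
      rw [← mem_Odot.mp hz x hx]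
      exact Finset.sum_congr rfl fun i _ => mul_comm _ _
    have h0 := hUc u hu v hv z hz'
    rw [phi0_cross] at h0
    rw [← h0]
    exact Finset.sum_congr rfl fun i _ => mul_comm _ _
  set X : Submodule ℝ (Fin 7 → ℝ) :=
    Submodule.span ℝ (Set.image2 crossf (W : Set (Fin 7 → ℝ)) (W : Set (Fin 7 → ℝ))) with hX
  -- membership in X span: closure of the dot-product-vanishing property
  have hdotX : ∀ v : Fin 7 → ℝ,
      (∀ w1 ∈ W, ∀ w2 ∈ W, ∑ i, crossf w1 w2 i * v i = 0) →
      ∀ y ∈ X, ∑ i, y i * v i = 0 := by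
    intro v hv y hy
    induction hy using Submodule.span_induction with
    | mem y hy =>
      obtain ⟨w1, hw1, w2, hw2, rfl⟩ := hy
      exact hv w1 hw1 w2 hw2
    | zero => simp
    | add a b _ _ ha hb => simp [Finset.sum_add_distrib, add_mul, ha, hb]
    | smul c a _ ha =>
      simp only [Pi.smul_apply, smul_eq_mul, mul_assoc, ← Finset.mul_sum, ha, mul_zero]
  -- WIperp2 W = Odot X
  have hperp : WIperp2 W = (Odot X : Set (Fin 7 → ℝ)) := by
    ext v
    constructor
    · intro hv
      show v ∈ Odot X
      rw [mem_Odot]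
      apply hdotX
      intro w1 h1 w2 h2
      have := hv w1 h1 w2 h2
      rwa [phi0_cross'] at this
    · intro hv w1 h1 w2 h2
      rw [phi0_cross']
      exact mem_Odot.mp hv (crossf w1 w2)
        (Submodule.subset_span (Set.mem_image2_of_mem h1 h2))
  -- pick the normal direction n inside W
  have hWOU : finrank ℝ (W ⊓ Odot U : Submodule ℝ (Fin 7 → ℝ)) = 1 := by
    have h1 := Submodule.finrank_sup_add_finrank_inf_eq W (Odot U)
    have htop : W ⊔ Odot U = ⊤ := by
      rw [eq_top_iff, ← sup_Odot_eq_top U]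
      exact sup_le_sup_right hUW _
    rw [htop, finrank_top, Module.finrank_fin_fun, finrank_Odot, hU3, hW] at h1
    omega
  have hWOUne : (W ⊓ Odot U : Submodule ℝ (Fin 7 → ℝ)) ≠ ⊥ := by
    intro h
    rw [h, finrank_bot] at hWOU
    exact one_ne_zero hWOU.symm
  obtain ⟨n, hnmem, hn0⟩ := Submodule.exists_mem_ne_zero_of_ne_bot hWOUne
  obtain ⟨hnW, hnOU⟩ := Submodule.mem_inf.mp hnmem
  have hnn : ∑ i, n i * n i ≠ 0 := self_dot_ne hn0
  -- W = U ⊕ ℝn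
  have hUspan : U ⊓ Submodule.span ℝ {n} = ⊥ := by
    rw [eq_bot_iff]
    rintro x hx
    obtain ⟨hx1, hx2⟩ := Submodule.mem_inf.mp hx
    obtain ⟨c, rfl⟩ := Submodule.mem_span_singleton.mp hx2
    have hd := mem_Odot.mp hnOU (c • n) hx1
    have he : ∑ i, (c • n) i * n i = c * ∑ i, n i * n i := by
      simp [Finset.mul_sum, mul_assoc]
    rw [he] at hd
    rcases mul_eq_zero.mp hd with h | h
    · simp [h]
    · exact absurd h hnn
  have hWsum : U ⊔ Submodule.span ℝ {n} = W := by
    apply Submodule.eq_of_le_of_finrank_le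
    · exact sup_le hUW ((Submodule.span_singleton_le_iff_mem _ _).mpr hnW)
    · have h1 := Submodule.finrank_sup_add_finrank_inf_eq U (Submodule.span ℝ {n})
      rw [hUspan, finrank_bot, finrank_span_singleton hn0, hU3] at h1
      rw [hW]
      omega
  -- U ≤ X
  have hUX : U ≤ X := by
    intro v hv
    by_cases hv0 : v = 0
    · simp [hv0]
    have hfr : finrank ℝ (U ⊓ Odot (Submodule.span ℝ {v}) : Submodule ℝ (Fin 7 → ℝ)) ≠ 0 := by
      have h1 := Submodule.finrank_sup_add_finrank_inf_eq U (Odot (Submodule.span ℝ {v}))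
      have h2 := finrank_le7 (U ⊔ Odot (Submodule.span ℝ {v}))
      rw [finrank_Odot, finrank_span_singleton hv0, hU3] at h1
      omega
    have hne : (U ⊓ Odot (Submodule.span ℝ {v}) : Submodule ℝ (Fin 7 → ℝ)) ≠ ⊥ := by
      intro h
      rw [h, finrank_bot] at hfr
      exact hfr rfl
    obtain ⟨u, humem, hu0⟩ := Submodule.exists_mem_ne_zero_of_ne_bot hne
    obtain ⟨huU, huO⟩ := Submodule.mem_inf.mp humem
    have hdot : ∑ i, u i * v i = 0 := by
      have := mem_Odot.mp huO v (Submodule.mem_span_singleton_self v)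
      rw [← this]
      exact Finset.sum_congr rfl fun i _ => mul_comm _ _
    have huu := self_dot_ne hu0
    have hkey : crossf u (crossf u v) = -((∑ i, u i * u i) • v) := by
      rw [crossf_crossf, hdot]
      simp
    have hvin : v = (-(∑ i, u i * u i)⁻¹) • crossf u (crossf u v) := by
      rw [hkey, smul_neg, neg_smul, neg_neg, smul_smul, inv_mul_cancel₀ huu, one_smul]
    rw [hvin]
    exact Submodule.smul_mem _ _
      (Submodule.subset_span (Set.mem_image2_of_mem (hUW huU) (hUW (hcrossU u huU v hv))))
  -- Odot W = image of U under (· × n), hence Odot W ≤ X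
  have hOWX : Odot W ≤ X := by
    have hle : U.map (crossL n) ≤ Odot W := by
      rintro y ⟨u, hu, rfl⟩
      rw [mem_Odot]
      intro w hw
      rw [← hWsum] at hw
      obtain ⟨u', hu', z, hz, rfl⟩ := Submodule.mem_sup.mp hw
      obtain ⟨c, rfl⟩ := Submodule.mem_span_singleton.mp hz
      rw [crossL_apply, dot_expand_left, dot_cross_swap u n u', dot_cross_right]
      have h1 : ∑ i, crossf u u' i * n i = 0 :=
        mem_Odot.mp hnOU (crossf u u') (hcrossU u hu u' hu')
      rw [h1]
      ring
    have hinj : Function.Injective ((crossL n).comp U.subtype) := by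
      rw [← LinearMap.ker_eq_bot, eq_bot_iff]
      rintro ⟨x, hxU⟩ hx
      have hx' : crossf x n = 0 := hx
      have hxn : ∑ i, x i * n i = 0 := mem_Odot.mp hnOU x hxU
      have h' : (∑ i, x i * x i) * ∑ i, n i * n i = 0 := by
        have hh := norm_cross x n
        rw [hx', hxn] at hh
        simpa using hh.symm
      have hxx : ∑ i, x i * x i = 0 := by
        rcases mul_eq_zero.mp h' with h | h
        · exact h
        · exact absurd h hnn
      have hx0 : x = 0 := by
        by_contra hc
        exact self_dot_ne hc hxx
      rw [Submodule.mem_bot]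
      exact Subtype.ext hx0
    have hrange : LinearMap.range ((crossL n).comp U.subtype) = U.map (crossL n) := by
      rw [LinearMap.range_comp, Submodule.range_subtype]
    have hT3 : finrank ℝ (U.map (crossL n)) = 3 := by
      rw [← hrange, LinearMap.finrank_range_of_inj hinj, hU3]
    have hOW3 : finrank ℝ (Odot W) = 3 := by
      rw [finrank_Odot, hW]
    have hTeq : U.map (crossL n) = Odot W :=
      Submodule.eq_of_le_of_finrank_le hle (by rw [hT3, hOW3])
    rw [← hTeq]
    rintro y ⟨u, hu, rfl⟩
    exact Submodule.subset_span (Set.mem_image2_of_mem (hUW hu) hnW)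
  -- X has dimension at least 6
  have hUOW : U ⊓ Odot W = ⊥ := by
    rw [eq_bot_iff]
    rintro x hx
    obtain ⟨hx1, hx2⟩ := Submodule.mem_inf.mp hx
    have := mem_Odot.mp hx2 x (hUW hx1)
    have hx0 : x = 0 := by
      by_contra hc
      exact self_dot_ne hc this
    simp [hx0]
  have hX6 : 6 ≤ finrank ℝ X := by
    have hle : U ⊔ Odot W ≤ X := sup_le hUX hOWX
    have h1 := Submodule.finrank_sup_add_finrank_inf_eq U (Odot W)
    rw [hUOW, finrank_bot, finrank_Odot, hU3, hW] at h1
    have := Submodule.finrank_mono hle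
    omega
  -- n is orthogonal to X
  have hnOX : n ∈ Odot X := by
    rw [mem_Odot]
    apply hdotX
    intro w1 h1 w2 h2
    rw [← hWsum] at h1 h2
    obtain ⟨u1, hu1, z1, hz1, rfl⟩ := Submodule.mem_sup.mp h1
    obtain ⟨c1, rfl⟩ := Submodule.mem_span_singleton.mp hz1
    obtain ⟨u2, hu2, z2, hz2, rfl⟩ := Submodule.mem_sup.mp h2
    obtain ⟨c2, rfl⟩ := Submodule.mem_span_singleton.mp hz2
    rw [dot_cross_expand, dot_cross_left, dot_cross_right, dot_cross_right,
      mem_Odot.mp hnOU (crossf u1 u2) (hcrossU u1 hu1 u2 hu2)]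
    ring
  -- Odot X = span {n}
  have hOX1 : finrank ℝ (Odot X) = 1 := by
    have h1 : Submodule.span ℝ {n} ≤ Odot X :=
      (Submodule.span_singleton_le_iff_mem _ _).mpr hnOX
    have h2 := Submodule.finrank_mono h1
    rw [finrank_span_singleton hn0] at h2
    rw [finrank_Odot] at h2 ⊢
    omega
  have hspan : Submodule.span ℝ {n} = Odot X := by
    apply Submodule.eq_of_le_of_finrank_le
    · exact (Submodule.span_singleton_le_iff_mem _ _).mpr hnOX
    · rw [hOX1, finrank_span_singleton hn0]
  constructor
  · intro v hv
    rw [hperp] at hv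
    have hv' : v ∈ Odot X := hv
    rw [← hspan] at hv'
    obtain ⟨c, rfl⟩ := Submodule.mem_span_singleton.mp hv'
    exact W.smul_mem c hnW
  · exact ⟨Submodule.span ℝ {n}, finrank_span_singleton hn0, by rw [hperp, ← hspan]⟩
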